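/- Let X be a stably locally compact space, i.e. X is sober, locally compact, and the intersection of any two compact saturated subsets of X is compact. Then V_wk X is locally convex-compact: every continuous valuation ν on X and every weak-open neighborhood 𝒰 of ν admit a convex compact saturated subset K of V_wk X with ν in the interior of K and K ⊆ 𝒰. -/

import Mathlib

open Set Topology

noncomputable section

/-- The topology on `ℝ≥0` induced by the Scott topology on `ℝ≥0∞`:
its nonempty proper open sets are the intervals `(r, ∞)`. -/
def scottNNReal : TopologicalSpace NNReal :=
  TopologicalSpace.generateFrom {s : Set NNReal | ∃ r : NNReal, s = Set.Ioi r}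

/-- Lower semicontinuity of a map into `ℝ≥0∞`, i.e. continuity into `ℝ≥0∞`
with the Scott topology of its usual order. -/
def IsLSC {X : Type*} [TopologicalSpace X] (f : X → ENNReal) : Prop :=
  ∀ r : ENNReal, IsOpen {x : X | r < f x}

/-- A topological cone: addition and scalar multiplication are jointly continuous,
where `ℝ≥0` carries the (subspace) Scott topology. -/
def IsTopologicalCone (C : Type*) [TopologicalSpace C] [Add C] [SMul NNReal C] : Prop :=
  Continuous (fun p : C × C => p.1 + p.2) ∧
    Continuous[@instTopologicalSpaceProd NNReal C scottNNReal _, _]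
      (fun p : NNReal × C => p.1 • p.2)

/-- A linear lower semicontinuous map `C → ℝ≥0∞`; the elements of the dual cone `C*`. -/
def IsLinearLSC {C : Type*} [TopologicalSpace C] [Add C] [SMul NNReal C]
    (Λ : C → ENNReal) : Prop :=
  (∀ x y : C, Λ (x + y) = Λ x + Λ y) ∧
    (∀ (a : NNReal) (x : C), Λ (a • x) = (a : ENNReal) * Λ x) ∧ IsLSC Λ

/-- The specialization preorder: `x ≤ y` iff every open set containing `x` contains `y`. -/
def SpecLE {X : Type*} [TopologicalSpace X] (x y : X) : Prop :=
  ∀ U : Set X, IsOpen U → x ∈ U → y ∈ U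

/-- A set is saturated iff it is upward closed for the specialization preorder. -/
def IsSaturated {X : Type*} [TopologicalSpace X] (A : Set X) : Prop :=
  ∀ x ∈ A, ∀ y : X, SpecLE x y → y ∈ A

/-- Upward closure with respect to the specialization preorder. -/
def upClosure {X : Type*} [TopologicalSpace X] (A : Set X) : Set X :=
  {y : X | ∃ x ∈ A, SpecLE x y}

/-- Convexity of a subset of a cone. -/
def IsConeConvex {C : Type*} [Add C] [SMul NNReal C] (A : Set C) : Prop :=
  ∀ x ∈ A, ∀ y ∈ A, ∀ a : NNReal, a ≤ 1 → a • x + (1 - a) • y ∈ A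

/-- A cone with a topology is locally convex if every point has a neighborhood base
of convex open sets. -/
def IsLocallyConvexCone (C : Type*) [TopologicalSpace C] [Add C] [SMul NNReal C] : Prop :=
  ∀ x : C, ∀ U : Set C, IsOpen U → x ∈ U →
    ∃ V : Set C, IsOpen V ∧ IsConeConvex V ∧ x ∈ V ∧ V ⊆ U

/-- A cone with a topology is locally convex-compact if every point has a neighborhood base
of convex compact sets. -/
def IsLocallyConvexCompactCone (C : Type*) [TopologicalSpace C] [Add C] [SMul NNReal C] : Prop :=
  ∀ x : C, ∀ U : Set C, IsOpen U → x ∈ U →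
    ∃ K : Set C, IsCompact K ∧ IsConeConvex K ∧ x ∈ interior K ∧ K ⊆ U

/-- A continuous valuation on a topological space `X`. -/
structure ContinuousValuation (X : Type*) [TopologicalSpace X] where
  toFun : Set X → ENNReal
  empty' : toFun ∅ = 0
  modular' : ∀ U V : Set X, IsOpen U → IsOpen V →
    toFun (U ∪ V) + toFun (U ∩ V) = toFun U + toFun V
  mono' : ∀ U V : Set X, IsOpen U → IsOpen V → U ⊆ V → toFun U ≤ toFun V
  scott' : ∀ D : Set (Set X), (∀ U ∈ D, IsOpen U) → DirectedOn (· ⊆ ·) D →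
    toFun (⋃₀ D) = ⨆ U ∈ D, toFun U

/-- The integral `∫ h dν = ∫₀^∞ ν({x : h(x) > t}) dt` of a map `h : X → ℝ≥0∞`
against a continuous valuation `ν`. -/
def valIntegral {X : Type*} [TopologicalSpace X] (ν : ContinuousValuation X)
    (h : X → ENNReal) : ENNReal :=
  ∫⁻ t in Set.Ioi (0 : ℝ), ν.toFun {x : X | ENNReal.ofReal t < h x}

/-- A barycenter of a continuous valuation `ν` on a cone `C`: a point `x₀` with
`Λ(x₀) = ∫ Λ dν` for every `Λ ∈ C*`. -/
def IsBarycenter {C : Type*} [TopologicalSpace C] [Add C] [SMul NNReal C]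
    (ν : ContinuousValuation C) (x₀ : C) : Prop :=
  ∀ Λ : C → ENNReal, IsLinearLSC Λ → Λ x₀ = valIntegral ν Λ

/-- The weak topology on the set of continuous valuations, generated by the subbasic
open sets `[U > r] = {ν : ν(U) > r}` for `U` open and `r : ℝ≥0`. -/
def weakTopology (X : Type*) [TopologicalSpace X] :
    TopologicalSpace (ContinuousValuation X) :=
  TopologicalSpace.generateFrom
    {S : Set (ContinuousValuation X) | ∃ (U : Set X) (r : NNReal),
      IsOpen U ∧ S = {ν : ContinuousValuation X | (r : ENNReal) < ν.toFun U}}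

/-- Pointwise addition of continuous valuations. -/
instance instAddContinuousValuation {X : Type*} [TopologicalSpace X] :
    Add (ContinuousValuation X) :=
  ⟨fun μ ν =>
    { toFun := fun U => μ.toFun U + ν.toFun U
      empty' := by simp [μ.empty', ν.empty']
      modular' := by
        intro U V hU hV
        rw [add_add_add_comm, μ.modular' U V hU hV, ν.modular' U V hU hV, add_add_add_comm]
      mono' := fun U V hU hV hUV =>
        add_le_add (μ.mono' U V hU hV hUV) (ν.mono' U V hU hV hUV)
      scott' := by
        intro D hD hdir
        try simp only []
        rw [μ.scott' D hD hdir, ν.scott' D hD hdir, iSup_subtype', iSup_subtype',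
          iSup_subtype']
        exact ENNReal.iSup_add_iSup fun i j => by
          obtain ⟨k, hk, hik, hjk⟩ := hdir i.1 i.2 j.1 j.2
          exact ⟨⟨k, hk⟩, add_le_add (μ.mono' _ _ (hD _ i.2) (hD _ hk) hik)
            (ν.mono' _ _ (hD _ j.2) (hD _ hk) hjk)⟩ }⟩

/-- Pointwise scalar multiplication of continuous valuations. -/
instance instSMulContinuousValuation {X : Type*} [TopologicalSpace X] :
    SMul NNReal (ContinuousValuation X) :=
  ⟨fun a μ =>
    { toFun := fun U => (a : ENNReal) * μ.toFun U
      empty' := by simp [μ.empty']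
      modular' := by
        intro U V hU hV
        rw [← mul_add, μ.modular' U V hU hV, mul_add]
      mono' := fun U V hU hV hUV => mul_le_mul_of_nonneg_left (μ.mono' U V hU hV hUV) (zero_le)
      scott' := by
        intro D hD hdir
        try simp only []
        rw [μ.scott' D hD hdir]
        simp_rw [ENNReal.mul_iSup] }⟩


section Aux

variable {X : Type*} [TopologicalSpace X]

lemma specLE_refl (x : X) : SpecLE x x := fun _ _ h => h

lemma subset_upClosure (A : Set X) : A ⊆ upClosure A :=
  fun x hx => ⟨x, hx, specLE_refl x⟩

lemma upClosure_subset {A W : Set X} (hW : IsOpen W) (h : A ⊆ W) : upClosure A ⊆ W := by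
  rintro y ⟨x, hx, hxy⟩
  exact hxy W hW (h hx)

lemma isSaturated_upClosure (A : Set X) : IsSaturated (upClosure A) := by
  rintro x ⟨z, hz, hzx⟩ y hxy
  exact ⟨z, hz, fun U hU h => hxy U hU (hzx U hU h)⟩

lemma isCompact_upClosure {Q : Set X} (hQ : IsCompact Q) : IsCompact (upClosure Q) := by
  refine isCompact_of_finite_subcover fun {ι} U hU hsub => ?_
  obtain ⟨t, ht⟩ := hQ.elim_finite_subcover U hU ((subset_upClosure Q).trans hsub)
  exact ⟨t, upClosure_subset (isOpen_biUnion fun i _ => hU i) ht⟩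

/-- Way-below-like relation on sets: `V` is open and sits below a compact saturated set
inside `W`. -/
def WB (V W : Set X) : Prop :=
  IsOpen V ∧ ∃ Q : Set X, IsCompact Q ∧ IsSaturated Q ∧ V ⊆ Q ∧ Q ⊆ W

lemma WB.isOpen {V W : Set X} (h : WB V W) : IsOpen V := h.1

lemma WB.subset {V W : Set X} (h : WB V W) : V ⊆ W := by
  obtain ⟨-, Q, -, -, hVQ, hQW⟩ := h
  exact hVQ.trans hQW

lemma WB_empty (W : Set X) : WB ∅ W :=
  ⟨isOpen_empty, ∅, isCompact_empty, fun x hx => hx.elim, subset_rfl, empty_subset W⟩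

lemma WB.mono {V W W' : Set X} (h : WB V W) (hWW' : W ⊆ W') : WB V W' := by
  obtain ⟨hV, Q, h1, h2, h3, h4⟩ := h
  exact ⟨hV, Q, h1, h2, h3, h4.trans hWW'⟩

lemma WB.union {A B U V : Set X} (hA : WB A U) (hB : WB B V) : WB (A ∪ B) (U ∪ V) := by
  obtain ⟨hAo, QA, h1, h2, h3, h4⟩ := hA
  obtain ⟨hBo, QB, g1, g2, g3, g4⟩ := hB
  exact ⟨hAo.union hBo, QA ∪ QB, h1.union g1,
    fun x hx y hxy => hx.imp (fun hx' => h2 x hx' y hxy) (fun hx' => g2 x hx' y hxy),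
    union_subset_union h3 g3, union_subset_union h4 g4⟩

lemma WB.union' {A B W : Set X} (hA : WB A W) (hB : WB B W) : WB (A ∪ B) W :=
  (hA.union hB).mono (by simp)

lemma WB.inter {A B U V : Set X}
    (hstab : ∀ K₁ K₂ : Set X, IsCompact K₁ → IsSaturated K₁ →
      IsCompact K₂ → IsSaturated K₂ → IsCompact (K₁ ∩ K₂))
    (hA : WB A U) (hB : WB B V) : WB (A ∩ B) (U ∩ V) := by
  obtain ⟨hAo, QA, h1, h2, h3, h4⟩ := hA
  obtain ⟨hBo, QB, g1, g2, g3, g4⟩ := hB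
  exact ⟨hAo.inter hBo, QA ∩ QB, hstab _ _ h1 h2 g1 g2,
    fun x hx y hxy => ⟨h2 x hx.1 y hxy, g2 x hx.2 y hxy⟩,
    inter_subset_inter h3 g3, inter_subset_inter h4 g4⟩

variable [LocallyCompactSpace X]

lemma exists_WB_mem {U : Set X} {x : X} (hU : IsOpen U) (hx : x ∈ U) :
    ∃ V, WB V U ∧ x ∈ V := by
  obtain ⟨K, hK, hxK, hKU⟩ := exists_compact_subset hU hx
  exact ⟨interior K, ⟨isOpen_interior, upClosure K, isCompact_upClosure hK,
    isSaturated_upClosure K, interior_subset.trans (subset_upClosure K),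
    upClosure_subset hU hKU⟩, hxK⟩

lemma exists_WB_superset {Q U : Set X} (hQ : IsCompact Q) (hU : IsOpen U) (hQU : Q ⊆ U) :
    ∃ V, WB V U ∧ Q ⊆ V := by
  obtain ⟨L, hL, hQL, hLU⟩ := exists_compact_between hQ hU hQU
  exact ⟨interior L, ⟨isOpen_interior, upClosure L, isCompact_upClosure hL,
    isSaturated_upClosure L, interior_subset.trans (subset_upClosure L),
    upClosure_subset hU hLU⟩, hQL⟩

lemma WB_biUnion {ι : Type*} {W : ι → Set X} {T : Set X} (s : Finset ι)
    (h : ∀ i ∈ s, WB (W i) T) : WB (⋃ i ∈ s, W i) T := by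
  classical
  induction s using Finset.induction_on with
  | empty => simpa using WB_empty T
  | @insert a s' ha ih =>
      rw [Finset.set_biUnion_insert]
      exact (h a (Finset.mem_insert_self a s')).union'
        (ih fun i hi => h i (Finset.mem_insert_of_mem hi))

lemma WB_split {Q U V : Set X} (hQ : IsCompact Q) (hU : IsOpen U) (hV : IsOpen V)
    (hQUV : Q ⊆ U ∪ V) : ∃ A B, WB A U ∧ WB B V ∧ Q ⊆ A ∪ B := by
  classical
  have h1 : ∀ x : Q, ∃ W : Set X, (WB W U ∨ WB W V) ∧ (x : X) ∈ W := by
    rintro ⟨x, hx⟩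
    rcases hQUV hx with hxU | hxV
    · obtain ⟨W, hW, hxW⟩ := exists_WB_mem hU hxU
      exact ⟨W, Or.inl hW, hxW⟩
    · obtain ⟨W, hW, hxW⟩ := exists_WB_mem hV hxV
      exact ⟨W, Or.inr hW, hxW⟩
  choose W hW hxW using h1
  have hcov : Q ⊆ ⋃ x : Q, W x := fun x hx => mem_iUnion.2 ⟨⟨x, hx⟩, hxW ⟨x, hx⟩⟩
  obtain ⟨t, ht⟩ := hQ.elim_finite_subcover W (fun x => ((hW x).elim WB.isOpen WB.isOpen)) hcov
  refine ⟨⋃ x ∈ t.filter (fun x => WB (W x) U), W x,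
    ⋃ x ∈ t.filter (fun x => ¬ WB (W x) U), W x, ?_, ?_, ?_⟩
  · exact WB_biUnion _ fun i hi => (Finset.mem_filter.mp hi).2
  · refine WB_biUnion _ fun i hi => ?_
    have := Finset.mem_filter.mp hi
    exact (hW i).resolve_left this.2
  · intro x hx
    obtain ⟨i, hit, hxi⟩ := Set.mem_iUnion₂.mp (ht hx)
    by_cases hiU : WB (W i) U
    · exact Or.inl (Set.mem_biUnion (Finset.mem_filter.mpr ⟨hit, hiU⟩) hxi)
    · exact Or.inr (Set.mem_biUnion (Finset.mem_filter.mpr ⟨hit, hiU⟩) hxi)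

end Aux

section Compactness

open Filter

variable {X : Type*} [TopologicalSpace X] [LocallyCompactSpace X]

/-- The key compactness result: sets of valuations defined by lower bounds on compact
sets are compact in the weak topology. -/
lemma isCompact_lowerBounds
    (hstab : ∀ K₁ K₂ : Set X, IsCompact K₁ → IsSaturated K₁ →
      IsCompact K₂ → IsSaturated K₂ → IsCompact (K₁ ∩ K₂))
    {ι : Sort*} (Q : ι → Set X) (s : ι → NNReal) (hQc : ∀ i, IsCompact (Q i)) :
    @IsCompact _ (weakTopology X)
      {μ : ContinuousValuation X | ∀ i, ∀ W : Set X, IsOpen W → Q i ⊆ W →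
        (s i : ENNReal) ≤ μ.toFun W} := by
  letI : TopologicalSpace (ContinuousValuation X) := weakTopology X
  set K : Set (ContinuousValuation X) :=
    {μ | ∀ i, ∀ W : Set X, IsOpen W → Q i ⊆ W → (s i : ENNReal) ≤ μ.toFun W} with hKdef
  rw [isCompact_iff_ultrafilter_le_nhds]
  intro 𝔉 h𝔉
  have hK𝔉 : K ∈ 𝔉 := le_principal_iff.mp h𝔉
  -- pointwise ultrafilter limits
  have hex : ∀ W : Set X, ∃ x : ENNReal,
      Tendsto (fun μ : ContinuousValuation X => μ.toFun W) 𝔉 (𝓝 x) := by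
    intro W
    obtain ⟨x, -, hx⟩ := isCompact_univ.ultrafilter_le_nhds
      (𝔉.map (fun μ : ContinuousValuation X => μ.toFun W)) (by simp)
    refine ⟨x, ?_⟩
    rwa [Ultrafilter.coe_map] at hx
  choose ℓ hℓ using hex
  have hℓ0 : ℓ ∅ = 0 := by
    refine tendsto_nhds_unique (hℓ ∅) ?_
    have : (fun μ : ContinuousValuation X => μ.toFun ∅) = fun _ => (0 : ENNReal) :=
      funext fun μ => μ.empty'
    rw [this]
    exact tendsto_const_nhds
  have hℓmono : ∀ U V : Set X, IsOpen U → IsOpen V → U ⊆ V → ℓ U ≤ ℓ V := fun U V hU hV hUV =>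
    le_of_tendsto_of_tendsto' (hℓ U) (hℓ V) (fun μ => μ.mono' U V hU hV hUV)
  have hℓmod : ∀ U V : Set X, IsOpen U → IsOpen V →
      ℓ (U ∪ V) + ℓ (U ∩ V) = ℓ U + ℓ V := by
    intro U V hU hV
    refine tendsto_nhds_unique ((hℓ (U ∪ V)).add (hℓ (U ∩ V))) ?_
    exact ((hℓ U).add (hℓ V)).congr fun μ => (μ.modular' U V hU hV).symm
  have hℓK : ∀ i, ∀ W : Set X, IsOpen W → Q i ⊆ W → (s i : ENNReal) ≤ ℓ W := by
    intro i W hW hQW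
    refine ge_of_tendsto (hℓ W) ?_
    exact Filter.mem_of_superset hK𝔉 fun μ hμ => hμ i W hW hQW
  -- the regularized limit valuation
  haveI hne : ∀ W : Set X, Nonempty {V : Set X // WB V W} := fun W => ⟨⟨∅, WB_empty W⟩⟩
  set f : Set X → ENNReal := fun W => ⨆ p : {V : Set X // WB V W}, ℓ p.1 with hfdef
  have hfle : ∀ {V W : Set X}, WB V W → ℓ V ≤ f W := by
    intro V W h
    exact le_iSup (fun p : {V : Set X // WB V W} => ℓ p.1) ⟨V, h⟩
  have hfmono : ∀ {W W' : Set X}, W ⊆ W' → f W ≤ f W' := by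
    intro W W' h
    exact iSup_le fun p => hfle (p.2.mono h)
  have hfmod : ∀ U V : Set X, IsOpen U → IsOpen V →
      f (U ∪ V) + f (U ∩ V) = f U + f V := by
    intro U V hU hV
    refine le_antisymm ?_ ?_
    · refine ENNReal.iSup_add_iSup_le ?_
      rintro ⟨C, hCo, QC, hQCc, hQCs, hCQ, hQUV⟩ ⟨B, hB⟩
      obtain ⟨A', B', hA', hB', hQAB⟩ := WB_split hQCc hU hV hQUV
      have hBU : B ⊆ U ∩ V := hB.subset
      have hA'' : WB (A' ∪ B) U := hA'.union' (hB.mono inter_subset_left)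
      have hB'' : WB (B' ∪ B) V := hB'.union' (hB.mono inter_subset_right)
      calc ℓ C + ℓ B
          ≤ ℓ ((A' ∪ B) ∪ (B' ∪ B)) + ℓ ((A' ∪ B) ∩ (B' ∪ B)) := by
            refine add_le_add ?_ ?_
            · refine hℓmono _ _ hCo (hA''.isOpen.union hB''.isOpen) ?_
              refine (hCQ.trans hQAB).trans ?_
              exact union_subset_union subset_union_left subset_union_left
            · refine hℓmono _ _ hB.isOpen (hA''.isOpen.inter hB''.isOpen) ?_
              exact subset_inter subset_union_right subset_union_right
        _ = ℓ (A' ∪ B) + ℓ (B' ∪ B) := hℓmod _ _ hA''.isOpen hB''.isOpen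
        _ ≤ f U + f V := add_le_add (hfle hA'') (hfle hB'')
    · refine ENNReal.iSup_add_iSup_le ?_
      rintro ⟨A, hA⟩ ⟨B, hB⟩
      calc ℓ A + ℓ B = ℓ (A ∪ B) + ℓ (A ∩ B) := (hℓmod _ _ hA.isOpen hB.isOpen).symm
        _ ≤ f (U ∪ V) + f (U ∩ V) :=
            add_le_add (hfle (hA.union hB)) (hfle (hA.inter hstab hB))
  set μstar : ContinuousValuation X :=
    { toFun := f
      empty' := by
        refine le_antisymm (iSup_le fun p => ?_) zero_le
        have : p.1 = ∅ := subset_empty_iff.mp p.2.subset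
        rw [this, hℓ0]
      modular' := hfmod
      mono' := fun U V _ _ hUV => hfmono hUV
      scott' := by
        intro D hD hdir
        refine le_antisymm (iSup_le fun p => ?_) ?_
        · obtain ⟨hVo, Qp, hQpc, hQps, hVQ, hQD⟩ := p.2
          rcases Qp.eq_empty_or_nonempty with h | ⟨x, hx⟩
          · have : p.1 = ∅ := subset_empty_iff.mp (h ▸ hVQ)
            rw [this, hℓ0]
            exact zero_le
          · obtain ⟨U₀, hU₀, -⟩ := hQD hx
            haveI : Nonempty D := ⟨⟨U₀, hU₀⟩⟩
            have hdir' : Directed (· ⊆ ·) (fun u : D => (u : Set X)) :=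
              directedOn_iff_directed.mp hdir
            obtain ⟨t, ht⟩ := hQpc.elim_finite_subcover (fun u : D => (u : Set X))
              (fun u => hD u u.2) (by rwa [← sUnion_eq_iUnion])
            obtain ⟨z, hz⟩ := hdir'.finset_le t
            have hQz : Qp ⊆ (z : Set X) :=
              ht.trans (iUnion₂_subset fun u hu => hz u hu)
            have : ℓ p.1 ≤ f (z : Set X) := hfle ⟨hVo, Qp, hQpc, hQps, hVQ, hQz⟩
            exact this.trans (le_iSup₂_of_le (z : Set X) z.2 le_rfl)
        · exact iSup₂_le fun U hU => hfmono (subset_sUnion_of_mem hU) }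
  refine ⟨μstar, ?_, ?_⟩
  · intro i W hW hQW
    obtain ⟨V, hVwb, hQV⟩ := exists_WB_superset (hQc i) hW hQW
    exact (hℓK i V hVwb.isOpen hQV).trans (hfle hVwb)
  · have hnhds : @nhds _ (weakTopology X) μstar =
        ⨅ S ∈ {S | μstar ∈ S ∧ S ∈ {S : Set (ContinuousValuation X) |
          ∃ (U : Set X) (r : NNReal), IsOpen U ∧
            S = {ν : ContinuousValuation X | (r : ENNReal) < ν.toFun U}}}, 𝓟 S :=
      TopologicalSpace.nhds_generateFrom
    rw [hnhds]
    refine le_iInf₂ fun S hS => ?_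
    obtain ⟨hμS, W, r, hWo, rfl⟩ := hS
    rw [le_principal_iff]
    have : ∃ p : {V : Set X // WB V W}, (r : ENNReal) < ℓ p.1 := by
      have hμS' : (r : ENNReal) < ⨆ p : {V : Set X // WB V W}, ℓ p.1 := hμS
      exact lt_iSup_iff.mp hμS'
    obtain ⟨⟨V, hVwb⟩, hrV⟩ := this
    have hmem : {μ : ContinuousValuation X | (r : ENNReal) < μ.toFun V} ∈ 𝔉 :=
      (hℓ V) (isOpen_Ioi.mem_nhds hrV)
    refine Filter.mem_of_superset hmem fun μ hμ => ?_
    exact lt_of_lt_of_le hμ (μ.mono' V W hVwb.isOpen hWo hVwb.subset)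

end Compactness
/-- For a stably locally compact space `X`, the space `V_wk X` of continuous
valuations with the weak topology is locally convex-compact. -/
theorem weakTopology_locally_convex_compact {X : Type*} [TopologicalSpace X]
    [T0Space X] [QuasiSober X] [LocallyCompactSpace X]
    (hstab : ∀ K₁ K₂ : Set X, IsCompact K₁ → IsSaturated K₁ →
      IsCompact K₂ → IsSaturated K₂ → IsCompact (K₁ ∩ K₂)) :
    ∀ ν : ContinuousValuation X, ∀ 𝒰 : Set (ContinuousValuation X),
      IsOpen[weakTopology X] 𝒰 → ν ∈ 𝒰 →
      ∃ K : Set (ContinuousValuation X), IsConeConvex K ∧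
        @IsCompact _ (weakTopology X) K ∧ @IsSaturated _ (weakTopology X) K ∧
        ν ∈ @interior _ (weakTopology X) K ∧ K ⊆ 𝒰 := by
  intro ν 𝒰 h𝒰 hν𝒰
  letI : TopologicalSpace (ContinuousValuation X) := weakTopology X
  classical
  -- extract a basic open neighborhood: finite intersection of subbasic sets
  have hbasis := TopologicalSpace.isTopologicalBasis_of_subbasis
    (t := weakTopology X)
    (s := {S : Set (ContinuousValuation X) | ∃ (U : Set X) (r : NNReal),
      IsOpen U ∧ S = {ν : ContinuousValuation X | (r : ENNReal) < ν.toFun U}}) rfl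
  obtain ⟨B, hBmem, hνB, hB𝒰⟩ := hbasis.exists_subset_of_mem_open hν𝒰 h𝒰
  obtain ⟨fS, ⟨hfin, hsubS⟩, rfl⟩ := hBmem
  haveI : Finite {s // s ∈ fS} := hfin.to_subtype
  have hchoice : ∀ p : {s // s ∈ fS}, ∃ (U : Set X) (r : NNReal), IsOpen U ∧
      p.1 = {μ : ContinuousValuation X | (r : ENNReal) < μ.toFun U} :=
    fun p => hsubS p.2
  choose U r hUo hseq using hchoice
  have hν' : ∀ p : {s // s ∈ fS}, (r p : ENNReal) < ν.toFun (U p) := by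
    intro p
    have h2 := (mem_sInter.mp hνB) p.1 p.2
    rwa [hseq p] at h2
  -- approximate from inside via the WB relation and Scott continuity
  have happrox : ∀ p : {s // s ∈ fS}, ∃ (V : Set X) (q : NNReal),
      WB V (U p) ∧ (r p : ENNReal) < (q : ENNReal) ∧ (q : ENNReal) < ν.toFun V := by
    intro p
    have hsup : ν.toFun (U p) = ⨆ V ∈ {V : Set X | WB V (U p)}, ν.toFun V := by
      have hD : ∀ V ∈ {V : Set X | WB V (U p)}, IsOpen V := fun V hV => hV.isOpen
      have hdir : DirectedOn (· ⊆ ·) {V : Set X | WB V (U p)} := fun a ha b hb =>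
        ⟨a ∪ b, ha.union' hb, subset_union_left, subset_union_right⟩
      have hUeq : ⋃₀ {V : Set X | WB V (U p)} = U p := by
        refine subset_antisymm (sUnion_subset fun V hV => hV.subset) fun x hx => ?_
        obtain ⟨V, hV, hxV⟩ := exists_WB_mem (hUo p) hx
        exact ⟨V, hV, hxV⟩
      conv_lhs => rw [← hUeq]
      exact ν.scott' _ hD hdir
    have := hν' p
    rw [hsup] at this
    simp only [lt_iSup_iff] at this
    obtain ⟨V, hVwb, hrV⟩ := this
    obtain ⟨q, hq1, hq2⟩ := ENNReal.lt_iff_exists_nnreal_btwn.mp hrV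
    exact ⟨V, q, hVwb, hq1, hq2⟩
  choose V q hVwb hrq hqν using happrox
  have hQex : ∀ p : {s // s ∈ fS}, ∃ Qs : Set X,
      IsCompact Qs ∧ IsSaturated Qs ∧ V p ⊆ Qs ∧ Qs ⊆ U p := fun p => (hVwb p).2
  choose Q hQc hQs hVQ hQU using hQex
  refine ⟨{μ : ContinuousValuation X | ∀ p : {s // s ∈ fS}, ∀ W : Set X, IsOpen W →
      Q p ⊆ W → (q p : ENNReal) ≤ μ.toFun W}, ?_, ?_, ?_, ?_, ?_⟩
  · -- convex
    intro μ hμ μ' hμ' a ha p W hW hQW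
    have h1 : (a : ENNReal) + ((1 : NNReal) - a : NNReal) = 1 := by
      rw [← ENNReal.coe_add, add_tsub_cancel_of_le ha, ENNReal.coe_one]
    have : (q p : ENNReal) = (a : ENNReal) * q p + ((1 : NNReal) - a : NNReal) * q p := by
      rw [← add_mul, h1, one_mul]
    rw [this]
    exact add_le_add (mul_le_mul_right (hμ p W hW hQW) _)
      (mul_le_mul_right (hμ' p W hW hQW) _)
  · -- compact
    exact isCompact_lowerBounds hstab Q q hQc
  · -- saturated
    intro μ hμ μ' hle p W hW hQW
    refine (hμ p W hW hQW).trans ?_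
    refine ENNReal.le_of_forall_nnreal_lt fun t ht => le_of_lt ?_
    exact hle {σ : ContinuousValuation X | (t : ENNReal) < σ.toFun W}
      (TopologicalSpace.isOpen_generateFrom_of_mem ⟨W, t, hW, rfl⟩) ht
  · -- interior
    set O : Set (ContinuousValuation X) :=
      ⋂ p : {s // s ∈ fS}, {μ : ContinuousValuation X | (q p : ENNReal) < μ.toFun (V p)}
      with hOdef
    have hOopen : IsOpen O :=
      isOpen_iInter_of_finite fun p : {s // s ∈ fS} =>
        TopologicalSpace.isOpen_generateFrom_of_mem
          (⟨V p, q p, (hVwb p).isOpen, rfl⟩ : ∃ (Up : Set X) (rp : NNReal), IsOpen Up ∧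
            {μ : ContinuousValuation X | ((q p : NNReal) : ENNReal) < μ.toFun (V p)} =
            {μ : ContinuousValuation X | (rp : ENNReal) < μ.toFun Up})
    have hOK : O ⊆ {μ : ContinuousValuation X | ∀ p : {s // s ∈ fS}, ∀ W : Set X,
        IsOpen W → Q p ⊆ W → (q p : ENNReal) ≤ μ.toFun W} := by
      intro μ hμ p W hW hQW
      have h1 : (q p : ENNReal) < μ.toFun (V p) := mem_iInter.mp hμ p
      exact h1.le.trans (μ.mono' (V p) W (hVwb p).isOpen hW ((hVQ p).trans hQW))
    exact interior_maximal hOK hOopen (mem_iInter.mpr fun p => hqν p)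
  · -- contained in 𝒰
    intro μ hμ
    refine hB𝒰 (mem_sInter.mpr fun S hS => ?_)
    rw [show S = {μ : ContinuousValuation X |
      (r ⟨S, hS⟩ : ENNReal) < μ.toFun (U ⟨S, hS⟩)} from hseq ⟨S, hS⟩]
    exact lt_of_lt_of_le (hrq ⟨S, hS⟩)
      (hμ ⟨S, hS⟩ (U ⟨S, hS⟩) (hUo ⟨S, hS⟩) (hQU ⟨S, hS⟩))
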